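/- Let A ∈ ℝ^{n×n} have the unique LU factorization A = LU and let ΔA ∈ ℝ^{n×n}. If ‖Y_L‖₂ · ‖Y_U‖₂ · ‖ΔA‖_F < 1/4, then A + ΔA has a unique LU factorization A + ΔA = (L + ΔL)(U + ΔU) with ΔL strictly lower triangular and ΔU upper triangular, and moreover ‖ΔU‖_F ≤ 2‖Y_U‖₂‖ΔA‖_F / (1 + √(1 − 4‖Y_U‖₂‖Y_L‖₂‖ΔA‖_F)) ≤ 2‖Y_U‖₂‖ΔA‖_F. -/

import Mathlib

open Matrix Kronecker

noncomputable section

/-- Frobenius norm of a real matrix. -/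
noncomputable def frob {m k : Type*} [Fintype m] [Fintype k] (A : Matrix m k ℝ) : ℝ :=
  Real.sqrt (∑ i, ∑ j, (A i j) ^ 2)

/-- Euclidean norm of a vector. -/
noncomputable def vnorm {m : Type*} [Fintype m] (v : m → ℝ) : ℝ :=
  Real.sqrt (∑ i, (v i) ^ 2)

/-- Spectral norm (ℓ²-operator norm) of a real matrix. -/
noncomputable def spec {m k : Type*} [Fintype m] [Fintype k] [DecidableEq k]
    (A : Matrix m k ℝ) : ℝ :=
  ‖LinearMap.toContinuousLinearMap (Matrix.toEuclideanLin A)‖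

/-- Entrywise absolute value of a matrix. -/
def eabs {m k : Type*} (A : Matrix m k ℝ) : Matrix m k ℝ :=
  Matrix.of fun i j => |A i j|

/-- Column-stacking operator: `vec X` indexed by (column, row). -/
def vec {n : ℕ} (X : Matrix (Fin n) (Fin n) ℝ) : Fin n × Fin n → ℝ :=
  fun p => X p.2 p.1

/-- Upper triangular part of a matrix. -/
def ut {n : ℕ} (X : Matrix (Fin n) (Fin n) ℝ) : Matrix (Fin n) (Fin n) ℝ :=
  Matrix.of fun i j => if i ≤ j then X i j else 0

/-- Strictly lower triangular part of a matrix. -/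
def slt {n : ℕ} (X : Matrix (Fin n) (Fin n) ℝ) : Matrix (Fin n) (Fin n) ℝ :=
  Matrix.of fun i j => if j < i then X i j else 0

/-- Upper triangular part with diagonal halved. -/
def up {n : ℕ} (X : Matrix (Fin n) (Fin n) ℝ) : Matrix (Fin n) (Fin n) ℝ :=
  Matrix.of fun i j => if i = j then X i j / 2 else if i ≤ j then X i j else 0

/-- `M_ut`: diagonal matrix with `vec (ut X) = (Mut n).mulVec (vec X)`. -/
def Mut (n : ℕ) : Matrix (Fin n × Fin n) (Fin n × Fin n) ℝ :=
  Matrix.diagonal fun p => if p.2 ≤ p.1 then 1 else 0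

/-- `M_slt`: diagonal matrix with `vec (slt X) = (Mslt n).mulVec (vec X)`. -/
def Mslt (n : ℕ) : Matrix (Fin n × Fin n) (Fin n × Fin n) ℝ :=
  Matrix.diagonal fun p => if p.1 < p.2 then 1 else 0

/-- `M_up`: diagonal matrix with `vec (up X) = (Mup n).mulVec (vec X)`. -/
def Mup (n : ℕ) : Matrix (Fin n × Fin n) (Fin n × Fin n) ℝ :=
  Matrix.diagonal fun p => if p.2 = p.1 then (1 : ℝ) / 2 else if p.2 < p.1 then 1 else 0

/-- `M_uvec`: 0–1 row-selection matrix extracting entries on or above the diagonal. -/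
def Muvec (n : ℕ) : Matrix {p : Fin n × Fin n // p.2 ≤ p.1} (Fin n × Fin n) ℝ :=
  Matrix.of fun q p => if (q : Fin n × Fin n) = p then 1 else 0

/-- `M_slvec`: 0–1 row-selection matrix extracting entries strictly below the diagonal. -/
def Mslvec (n : ℕ) : Matrix {p : Fin n × Fin n // p.1 < p.2} (Fin n × Fin n) ℝ :=
  Matrix.of fun q p => if (q : Fin n × Fin n) = p then 1 else 0

/-- The vec-permutation matrix `Π_{nn}` with `(vecPerm n).mulVec (vec X) = vec Xᵀ`. -/
def vecPerm (n : ℕ) : Matrix (Fin n × Fin n) (Fin n × Fin n) ℝ :=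
  Matrix.of fun p q => if p.1 = q.2 ∧ p.2 = q.1 then 1 else 0

def IsUnitLowerTri {n : ℕ} (L : Matrix (Fin n) (Fin n) ℝ) : Prop :=
  (∀ i, L i i = 1) ∧ ∀ i j : Fin n, i < j → L i j = 0

def IsLowerTri {n : ℕ} (L : Matrix (Fin n) (Fin n) ℝ) : Prop :=
  ∀ i j : Fin n, i < j → L i j = 0

def IsUpperTri {n : ℕ} (U : Matrix (Fin n) (Fin n) ℝ) : Prop :=
  ∀ i j : Fin n, j < i → U i j = 0

def IsStrictLowerTri {n : ℕ} (X : Matrix (Fin n) (Fin n) ℝ) : Prop :=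
  ∀ i j : Fin n, i ≤ j → X i j = 0

/-- Leading (n−1)×(n−1) principal submatrix. -/
def lead {n : ℕ} (U : Matrix (Fin n) (Fin n) ℝ) : Matrix (Fin (n - 1)) (Fin (n - 1)) ℝ :=
  Matrix.of fun i j => U (Fin.castLE (Nat.sub_le n 1) i) (Fin.castLE (Nat.sub_le n 1) j)

/-- `pad B` is the n×n matrix with B as leading (n−1)×(n−1) block and zeros elsewhere. -/
def pad {n : ℕ} (B : Matrix (Fin (n - 1)) (Fin (n - 1)) ℝ) : Matrix (Fin n) (Fin n) ℝ :=
  Matrix.of fun i j =>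
    if h1 : (i : ℕ) < n - 1 then
      if h2 : (j : ℕ) < n - 1 then B ⟨i, h1⟩ ⟨j, h2⟩ else 0
    else 0

/-- `Y_L = M_slvec (I_n ⊗ L) M_slt (diag(U_{n−1}^{−T}, 0) ⊗ L^{−1})`. -/
noncomputable def YL {n : ℕ} (L U : Matrix (Fin n) (Fin n) ℝ) :
    Matrix {p : Fin n × Fin n // p.1 < p.2} (Fin n × Fin n) ℝ :=
  Mslvec n * ((1 : Matrix (Fin n) (Fin n) ℝ) ⊗ₖ L) * Mslt n *
    (pad (((lead U)⁻¹)ᵀ) ⊗ₖ L⁻¹)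

/-- `Y_U = M_uvec (Uᵀ ⊗ I_n) M_ut (U^{−T} ⊗ L^{−1})`. -/
noncomputable def YU {n : ℕ} (L U : Matrix (Fin n) (Fin n) ℝ) :
    Matrix {p : Fin n × Fin n // p.2 ≤ p.1} (Fin n × Fin n) ℝ :=
  Muvec n * (Uᵀ ⊗ₖ (1 : Matrix (Fin n) (Fin n) ℝ)) * Mut n * ((U⁻¹)ᵀ ⊗ₖ L⁻¹)

/-- `G_R = M_uvec (Rᵀ ⊗ I_n) M_up [R^{−T} ⊗ I_n + (I_n ⊗ R^{−T}) Π_{nn}]`. -/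
noncomputable def GR {n : ℕ} (R : Matrix (Fin n) (Fin n) ℝ) :
    Matrix {p : Fin n × Fin n // p.2 ≤ p.1} (Fin n × Fin n) ℝ :=
  Muvec n * (Rᵀ ⊗ₖ (1 : Matrix (Fin n) (Fin n) ℝ)) * Mup n *
    ((R⁻¹)ᵀ ⊗ₖ (1 : Matrix (Fin n) (Fin n) ℝ) +
      ((1 : Matrix (Fin n) (Fin n) ℝ) ⊗ₖ (R⁻¹)ᵀ) * vecPerm n)

/-- `H_R = M_uvec (Rᵀ ⊗ I_n) M_up (R^{−T} ⊗ R^{−T})`. -/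
noncomputable def HR {n : ℕ} (R : Matrix (Fin n) (Fin n) ℝ) :
    Matrix {p : Fin n × Fin n // p.2 ≤ p.1} (Fin n × Fin n) ℝ :=
  Muvec n * (Rᵀ ⊗ₖ (1 : Matrix (Fin n) (Fin n) ℝ)) * Mup n * ((R⁻¹)ᵀ ⊗ₖ (R⁻¹)ᵀ)


/-! ### Auxiliary lemmas -/

section Aux

open Matrix Finset

variable {ι κ : Type*} [Fintype ι] [Fintype κ]

lemma vnorm_nonneg (v : ι → ℝ) : 0 ≤ vnorm v := Real.sqrt_nonneg _

lemma vnorm_eq_norm (v : ι → ℝ) : vnorm v = ‖(WithLp.equiv 2 (ι → ℝ)).symm v‖ := by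
  rw [vnorm, EuclideanSpace.norm_eq]
  congr 1
  refine Finset.sum_congr rfl fun i _ => ?_
  rw [WithLp.equiv_symm_apply, PiLp.toLp_apply, Real.norm_eq_abs, sq_abs]

lemma spec_nonneg [DecidableEq κ] (A : Matrix ι κ ℝ) : 0 ≤ spec A := norm_nonneg _

lemma vnorm_mulVec_le [DecidableEq κ] (A : Matrix ι κ ℝ) (v : κ → ℝ) :
    vnorm (A.mulVec v) ≤ spec A * vnorm v := by
  rw [vnorm_eq_norm, vnorm_eq_norm]
  have h := (LinearMap.toContinuousLinearMap (Matrix.toEuclideanLin A)).le_opNorm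
    ((WithLp.equiv 2 (κ → ℝ)).symm v)
  simpa [spec] using h

lemma abs_le_vnorm (v : ι → ℝ) (i : ι) : |v i| ≤ vnorm v := by
  rw [vnorm, ← Real.sqrt_sq_eq_abs]
  exact Real.sqrt_le_sqrt (Finset.single_le_sum (f := fun j => (v j)^2)
    (fun j _ => sq_nonneg _) (Finset.mem_univ i))

lemma vnorm_subtype_eq {P : ι → Prop} [DecidablePred P] (v : ι → ℝ)
    (hv : ∀ i, ¬ P i → v i = 0) : vnorm (fun q : {i // P i} => v q.1) = vnorm v := by
  rw [vnorm, vnorm]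
  congr 1
  calc ∑ q : {i // P i}, (v q.1)^2
      = ∑ i ∈ Finset.univ.filter P, (v i)^2 :=
        (Finset.sum_subtype (p := P) (Finset.univ.filter P)
          (fun x => Finset.mem_filter.trans (and_iff_right (Finset.mem_univ x)))
          (fun i => v i ^ 2)).symm
    _ = ∑ i, (v i)^2 := Finset.sum_filter_of_ne (fun i _ h => by
        by_contra hP
        exact h (by rw [hv i hP]; ring))

lemma sq_vnorm (v : ι → ℝ) : (vnorm v)^2 = ∑ i, (v i)^2 :=
  Real.sq_sqrt (Finset.sum_nonneg fun i _ => sq_nonneg _)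

/-- Cauchy–Schwarz for sums. -/
lemma abs_sum_mul_le (y w : ι → ℝ) : |∑ i, y i * w i| ≤ vnorm y * vnorm w := by
  rw [vnorm, vnorm, ← Real.sqrt_sq_eq_abs, ← Real.sqrt_mul (Finset.sum_nonneg fun i _ => sq_nonneg _)]
  exact Real.sqrt_le_sqrt (Finset.sum_mul_sq_le_sq_mul_sq Finset.univ y w)

lemma vnorm_mulVec_frob {n m : ℕ} (F : Matrix (Fin n) (Fin m) ℝ) (x : Fin m → ℝ) :
    vnorm (F.mulVec x) ≤ frob F * vnorm x := by
  rw [vnorm, frob, vnorm, ← Real.sqrt_mul (x := ∑ i, ∑ j, F i j ^ 2) (Finset.sum_nonneg fun i _ =>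
    Finset.sum_nonneg fun j _ => sq_nonneg _)]
  apply Real.sqrt_le_sqrt
  rw [Finset.sum_mul]
  apply Finset.sum_le_sum
  intro i _
  simp only [Matrix.mulVec, dotProduct]
  exact Finset.sum_mul_sq_le_sq_mul_sq Finset.univ (F i) x

end Aux

section VecAux

open Matrix Finset

lemma frob_eq_vnorm_vec {n : ℕ} (X : Matrix (Fin n) (Fin n) ℝ) : frob X = vnorm (_root_.vec X) := by
  rw [frob, vnorm]
  congr 1
  rw [Fintype.sum_prod_type]
  exact Finset.sum_comm

lemma frob_nonneg {n : ℕ} (X : Matrix (Fin n) (Fin n) ℝ) : 0 ≤ frob X := Real.sqrt_nonneg _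

lemma vec_add {n : ℕ} (X Y : Matrix (Fin n) (Fin n) ℝ) : _root_.vec (X + Y) = _root_.vec X + _root_.vec Y := rfl

lemma vec_sub {n : ℕ} (X Y : Matrix (Fin n) (Fin n) ℝ) : _root_.vec (X - Y) = _root_.vec X - _root_.vec Y := rfl

lemma frob_add_le {n : ℕ} (X Y : Matrix (Fin n) (Fin n) ℝ) :
    frob (X + Y) ≤ frob X + frob Y := by
  rw [frob_eq_vnorm_vec, frob_eq_vnorm_vec, frob_eq_vnorm_vec, vec_add,
    vnorm_eq_norm, vnorm_eq_norm, vnorm_eq_norm, WithLp.equiv_symm_apply, WithLp.toLp_add]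
  exact norm_add_le _ _

lemma frob_sub_le {n : ℕ} (X Y : Matrix (Fin n) (Fin n) ℝ) :
    frob (X - Y) ≤ frob X + frob Y := by
  rw [frob_eq_vnorm_vec, frob_eq_vnorm_vec, frob_eq_vnorm_vec, vec_sub,
    vnorm_eq_norm, vnorm_eq_norm, vnorm_eq_norm, WithLp.equiv_symm_apply, WithLp.toLp_sub]
  exact norm_sub_le _ _

lemma frob_mul_le {n : ℕ} (P Q : Matrix (Fin n) (Fin n) ℝ) :
    frob (P * Q) ≤ frob P * frob Q := by
  rw [frob, frob, frob, ← Real.sqrt_mul (x := ∑ i, ∑ j, P i j ^ 2) (Finset.sum_nonneg fun i _ =>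
    Finset.sum_nonneg fun j _ => sq_nonneg _)]
  apply Real.sqrt_le_sqrt
  calc ∑ i, ∑ j, ((P * Q) i j)^2
      ≤ ∑ i, ∑ j, (∑ k, (P i k)^2) * (∑ k, (Q k j)^2) := by
        refine Finset.sum_le_sum fun i _ => Finset.sum_le_sum fun j _ => ?_
        rw [Matrix.mul_apply]
        exact Finset.sum_mul_sq_le_sq_mul_sq _ _ _
    _ = (∑ i, ∑ k, (P i k)^2) * (∑ k, ∑ j, (Q k j)^2) := by
        rw [Finset.sum_mul]
        refine Finset.sum_congr rfl fun i _ => ?_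
        rw [← Finset.mul_sum]
        congr 1
        exact Finset.sum_comm

lemma vec_kron {n : ℕ} (A B X : Matrix (Fin n) (Fin n) ℝ) :
    (A ⊗ₖ B).mulVec (_root_.vec X) = _root_.vec (B * X * Aᵀ) := by
  funext p
  rcases p with ⟨c, r⟩
  simp only [Matrix.mulVec, dotProduct, _root_.vec, Matrix.kroneckerMap_apply,
    Fintype.sum_prod_type, Matrix.mul_apply, Matrix.transpose_apply, Finset.sum_mul]
  refine Finset.sum_congr rfl fun l _ => Finset.sum_congr rfl fun k _ => by ring

lemma Mslt_mulVec {n : ℕ} (X : Matrix (Fin n) (Fin n) ℝ) :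
    (Mslt n).mulVec (_root_.vec X) = _root_.vec (slt X) := by
  funext p
  rw [Mslt, Matrix.mulVec_diagonal]
  rcases p with ⟨c, r⟩
  by_cases h : c < r <;> simp [_root_.vec, slt, h]

lemma Mut_mulVec {n : ℕ} (X : Matrix (Fin n) (Fin n) ℝ) :
    (Mut n).mulVec (_root_.vec X) = _root_.vec (ut X) := by
  funext p
  rw [Mut, Matrix.mulVec_diagonal]
  rcases p with ⟨c, r⟩
  by_cases h : r ≤ c <;> simp [_root_.vec, ut, h]

lemma Mslvec_mulVec {n : ℕ} (v : Fin n × Fin n → ℝ) (q : {p : Fin n × Fin n // p.1 < p.2}) :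
    (Mslvec n).mulVec v q = v q.1 := by
  simp [Mslvec, Matrix.mulVec, dotProduct, ite_mul, one_mul, zero_mul]

lemma Muvec_mulVec {n : ℕ} (v : Fin n × Fin n → ℝ) (q : {p : Fin n × Fin n // p.2 ≤ p.1}) :
    (Muvec n).mulVec v q = v q.1 := by
  simp [Muvec, Matrix.mulVec, dotProduct, ite_mul, one_mul, zero_mul]

end VecAux


section TriAux

open Matrix

variable {n : ℕ}

lemma IsUnitLowerTri.isLower {L : Matrix (Fin n) (Fin n) ℝ} (h : IsUnitLowerTri L) :
    IsLowerTri L := fun i j hij => h.2 i j hij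

lemma ut_add_slt (X : Matrix (Fin n) (Fin n) ℝ) : ut X + slt X = X := by
  ext i j
  by_cases h : i ≤ j
  · simp [ut, slt, Matrix.add_apply, h, not_lt.mpr h]
  · simp [ut, slt, Matrix.add_apply, h, lt_of_not_ge h]

lemma slt_isStrict (X : Matrix (Fin n) (Fin n) ℝ) : IsStrictLowerTri (slt X) :=
  fun i j hij => by simp [slt, not_lt.mpr hij]

lemma ut_isUpper (X : Matrix (Fin n) (Fin n) ℝ) : IsUpperTri (ut X) :=
  fun i j hij => by simp [ut, not_le.mpr hij]

lemma ut_sub (X Y : Matrix (Fin n) (Fin n) ℝ) : ut (X - Y) = ut X - ut Y := by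
  ext i j
  by_cases h : i ≤ j <;> simp [ut, Matrix.sub_apply, h]

lemma slt_sub (X Y : Matrix (Fin n) (Fin n) ℝ) : slt (X - Y) = slt X - slt Y := by
  ext i j
  by_cases h : j < i <;> simp [slt, Matrix.sub_apply, h]

lemma lower_mul_strict {P X : Matrix (Fin n) (Fin n) ℝ} (hP : IsLowerTri P)
    (hX : IsStrictLowerTri X) : IsStrictLowerTri (P * X) := by
  intro i j hij
  rw [Matrix.mul_apply]
  refine Finset.sum_eq_zero fun k _ => ?_
  by_cases hk : k ≤ j
  · rw [hX k j hk, mul_zero]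
  · rw [hP i k (lt_of_le_of_lt hij (not_le.mp hk)), zero_mul]

lemma upper_mul_upper {P Q : Matrix (Fin n) (Fin n) ℝ} (hP : IsUpperTri P)
    (hQ : IsUpperTri Q) : IsUpperTri (P * Q) := by
  intro i j hij
  rw [Matrix.mul_apply]
  refine Finset.sum_eq_zero fun k _ => ?_
  by_cases hk : j < k
  · rw [hQ k j hk, mul_zero]
  · rw [hP i k (lt_of_le_of_lt (not_lt.mp hk) hij), zero_mul]

lemma unitLower_mul {L1 L2 : Matrix (Fin n) (Fin n) ℝ} (h1 : IsUnitLowerTri L1)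
    (h2 : IsUnitLowerTri L2) : IsUnitLowerTri (L1 * L2) := by
  constructor
  · intro i
    rw [Matrix.mul_apply, Finset.sum_eq_single i]
    · rw [h1.1 i, h2.1 i, mul_one]
    · intro k _ hk
      rcases lt_or_gt_of_ne hk with h | h
      · rw [h2.2 k i h, mul_zero]
      · rw [h1.2 i k h, zero_mul]
    · intro h'; exact absurd (Finset.mem_univ i) h'
  · intro i j hij
    rw [Matrix.mul_apply]
    refine Finset.sum_eq_zero fun k _ => ?_
    by_cases hk : i < k
    · rw [h1.2 i k hk, zero_mul]
    · rw [h2.2 k j (lt_of_le_of_lt (not_lt.mp hk) hij), mul_zero]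

lemma unitLower_det {L : Matrix (Fin n) (Fin n) ℝ} (hL : IsUnitLowerTri L) : L.det = 1 := by
  rw [Matrix.det_of_lowerTriangular L (fun i j hij => hL.2 i j hij)]
  simp [hL.1]

lemma unitLower_det_isUnit {L : Matrix (Fin n) (Fin n) ℝ} (hL : IsUnitLowerTri L) :
    IsUnit L.det := by rw [unitLower_det hL]; exact isUnit_one

lemma upper_diag_ne_zero {U : Matrix (Fin n) (Fin n) ℝ} (hU : IsUpperTri U)
    (hdet : IsUnit U.det) (i : Fin n) : U i i ≠ 0 := by
  rw [Matrix.det_of_upperTriangular (fun i j hij => hU i j hij)] at hdet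
  intro h
  exact hdet.ne_zero (Finset.prod_eq_zero (Finset.mem_univ i) h)

lemma inv_lower {L : Matrix (Fin n) (Fin n) ℝ} (hL : IsLowerTri L) (h : IsUnit L.det) :
    IsLowerTri L⁻¹ := by
  haveI := L.invertibleOfIsUnitDet h
  exact fun i j hij =>
    Matrix.blockTriangular_inv_of_blockTriangular
      (show L.BlockTriangular OrderDual.toDual from fun a b hab => hL a b hab) hij

lemma inv_upper {U : Matrix (Fin n) (Fin n) ℝ} (hU : IsUpperTri U) (h : IsUnit U.det) :
    IsUpperTri U⁻¹ := by
  haveI := U.invertibleOfIsUnitDet h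
  exact fun i j hij =>
    Matrix.blockTriangular_inv_of_blockTriangular
      (show U.BlockTriangular id from fun a b hab => hU a b hab) hij

lemma unitLower_inv_diag {L : Matrix (Fin n) (Fin n) ℝ} (hL : IsUnitLowerTri L) (i : Fin n) :
    L⁻¹ i i = 1 := by
  have h1 : (L⁻¹ * L) i i = 1 := by
    rw [Matrix.nonsing_inv_mul L (unitLower_det_isUnit hL)]; simp
  rw [Matrix.mul_apply, Finset.sum_eq_single i] at h1
  · rwa [hL.1 i, mul_one] at h1
  · intro k _ hk
    rcases lt_or_gt_of_ne hk with h | h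
    · rw [hL.2 k i h, mul_zero]
    · rw [inv_lower hL.isLower (unitLower_det_isUnit hL) i k h, zero_mul]
  · intro h; exact absurd (Finset.mem_univ i) h

lemma unitLower_inv {L : Matrix (Fin n) (Fin n) ℝ} (hL : IsUnitLowerTri L) :
    IsUnitLowerTri L⁻¹ :=
  ⟨unitLower_inv_diag hL, fun i j hij => inv_lower hL.isLower (unitLower_det_isUnit hL) i j hij⟩

lemma upper_inv_diag {U : Matrix (Fin n) (Fin n) ℝ} (hU : IsUpperTri U) (h : IsUnit U.det)
    (i : Fin n) : U⁻¹ i i * U i i = 1 := by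
  have h1 : (U⁻¹ * U) i i = 1 := by rw [Matrix.nonsing_inv_mul U h]; simp
  rw [Matrix.mul_apply, Finset.sum_eq_single i] at h1
  · exact h1
  · intro k _ hk
    rcases lt_or_gt_of_ne hk with hlt | hgt
    · rw [inv_upper hU h i k hlt, zero_mul]
    · rw [hU k i hgt, mul_zero]
  · intro h'; exact absurd (Finset.mem_univ i) h'

lemma diag_ut_mul {U M : Matrix (Fin n) (Fin n) ℝ} (hU : IsUpperTri U) (i : Fin n) :
    (ut M * U) i i = M i i * U i i := by
  rw [Matrix.mul_apply, Finset.sum_eq_single i]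
  · simp [ut]
  · intro k _ hk
    rcases lt_or_gt_of_ne hk with hlt | hgt
    · simp [ut, not_le.mpr hlt]
    · rw [hU k i hgt, mul_zero]
  · intro h'; exact absurd (Finset.mem_univ i) h'

lemma sum_fin_pred (f : Fin n → ℝ) (g : Fin (n-1) → ℝ)
    (h0 : ∀ k : Fin n, ¬ (k:ℕ) < n-1 → f k = 0)
    (h1 : ∀ k : Fin (n-1), f (Fin.castLE (Nat.sub_le n 1) k) = g k) :
    ∑ k, f k = ∑ k, g k := by
  rw [← Finset.sum_filter_of_ne (s := Finset.univ) (p := fun k : Fin n => (k:ℕ) < n-1)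
    (fun k _ hk => by by_contra h; exact hk (h0 k h))]
  have hset : Finset.univ.filter (fun k : Fin n => (k:ℕ) < n-1)
      = Finset.univ.map (Fin.castLEEmb (Nat.sub_le n 1)) := by
    ext k
    rw [Finset.mem_filter, Finset.mem_map]
    constructor
    · intro hk
      refine ⟨⟨k.1, hk.2⟩, Finset.mem_univ _, ?_⟩
      ext
      simp [Fin.castLEEmb, Fin.castLE]
    · rintro ⟨a, -, rfl⟩
      exact ⟨Finset.mem_univ _, a.2⟩
  rw [hset, Finset.sum_map]
  exact Finset.sum_congr rfl fun k _ => h1 k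

lemma pad_transpose (B : Matrix (Fin (n-1)) (Fin (n-1)) ℝ) : (pad Bᵀ)ᵀ = pad B := by
  ext i j
  by_cases h1 : (i:ℕ) < n-1 <;> by_cases h2 : (j:ℕ) < n-1 <;>
    simp [pad, Matrix.transpose_apply, h1, h2]

end TriAux

section PadAux

open Matrix

variable {n : ℕ} {U : Matrix (Fin n) (Fin n) ℝ}

lemma pad_entries (hU : IsUpperTri U) (hUdet : IsUnit U.det) (hUsub : IsUnit (lead U).det) :
    ∀ k q : Fin n, (q:ℕ) < n - 1 → pad ((lead U)⁻¹) k q = U⁻¹ k q := by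
  -- first: U * pad ((lead U)⁻¹) agrees with 1 on columns < n-1
  have hUW : ∀ m q : Fin n, (q:ℕ) < n - 1 →
      (U * pad ((lead U)⁻¹)) m q = (1 : Matrix (Fin n) (Fin n) ℝ) m q := by
    intro m q hq
    rw [Matrix.mul_apply]
    by_cases hm : (m:ℕ) < n - 1
    · have key : ((lead U) * (lead U)⁻¹) ⟨m.1, hm⟩ ⟨q.1, hq⟩
          = (1 : Matrix (Fin (n-1)) (Fin (n-1)) ℝ) ⟨m.1, hm⟩ ⟨q.1, hq⟩ := by
        rw [Matrix.mul_nonsing_inv _ hUsub]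
      rw [Matrix.mul_apply] at key
      have hsum := sum_fin_pred (fun k : Fin n => U m k * pad ((lead U)⁻¹) k q)
        (fun k : Fin (n-1) => lead U ⟨m.1, hm⟩ k * (lead U)⁻¹ k ⟨q.1, hq⟩)
        (fun k hk => by simp [pad, hk])
        (fun k => by simp [pad, lead, Fin.castLE, k.isLt, hq])
      rw [hsum, key]
      by_cases hmq : m = q
      · subst hmq; simp [Matrix.one_apply]
      · have hne : (⟨m.1, hm⟩ : Fin (n-1)) ≠ ⟨q.1, hq⟩ := by
          intro h
          apply hmq
          have hv : (m : ℕ) = (q : ℕ) := Fin.mk_eq_mk.mp h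
          exact Fin.ext hv
        simp [Matrix.one_apply, hmq, hne]
    · have hz : ∀ k : Fin n, U m k * pad ((lead U)⁻¹) k q = 0 := by
        intro k
        by_cases hk : (k:ℕ) < n - 1
        · have : k < m := by
            have : (k:ℕ) < (m:ℕ) := lt_of_lt_of_le hk (not_lt.mp hm)
            exact this
          rw [hU m k this, zero_mul]
        · simp [pad, hk]
      rw [Finset.sum_eq_zero fun k _ => hz k]
      have : m ≠ q := by
        intro h; subst h; exact hm hq
      simp [Matrix.one_apply, this]
  intro k q hq
  have expand : pad ((lead U)⁻¹) k q = (U⁻¹ * (U * pad ((lead U)⁻¹))) k q := by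
    rw [← Matrix.mul_assoc, Matrix.nonsing_inv_mul _ hUdet, Matrix.one_mul]
  rw [expand, Matrix.mul_apply, Finset.sum_eq_single q]
  · rw [hUW q q hq]; simp [Matrix.one_apply]
  · intro b _ hb
    rw [hUW b q hq]
    simp [Matrix.one_apply, hb]
  · intro h'; exact absurd (Finset.mem_univ q) h'

end PadAux


section YAux

open Matrix Kronecker

variable {n : ℕ}

/-- `Y(F) = L · slt(L⁻¹ F U⁻¹)`. -/
noncomputable def Ylin (L U F : Matrix (Fin n) (Fin n) ℝ) : Matrix (Fin n) (Fin n) ℝ :=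
  L * slt (L⁻¹ * F * U⁻¹)

/-- `X(F) = ut(L⁻¹ F U⁻¹) · U`. -/
noncomputable def Ulin (L U F : Matrix (Fin n) (Fin n) ℝ) : Matrix (Fin n) (Fin n) ℝ :=
  ut (L⁻¹ * F * U⁻¹) * U

variable {L U : Matrix (Fin n) (Fin n) ℝ}

lemma Ylin_sub (F G : Matrix (Fin n) (Fin n) ℝ) :
    Ylin L U (F - G) = Ylin L U F - Ylin L U G := by
  unfold Ylin
  rw [Matrix.mul_sub, Matrix.sub_mul, slt_sub, Matrix.mul_sub]

lemma Ulin_sub (F G : Matrix (Fin n) (Fin n) ℝ) :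
    Ulin L U (F - G) = Ulin L U F - Ulin L U G := by
  unfold Ulin
  rw [Matrix.mul_sub, Matrix.sub_mul, ut_sub, Matrix.sub_mul]

lemma YU_mulVec (F : Matrix (Fin n) (Fin n) ℝ) :
    (YU L U).mulVec (_root_.vec F) = fun q => _root_.vec (Ulin L U F) q.1 := by
  rw [YU, ← Matrix.mulVec_mulVec, ← Matrix.mulVec_mulVec, ← Matrix.mulVec_mulVec,
    vec_kron, Matrix.transpose_transpose, Mut_mulVec, vec_kron, Matrix.transpose_transpose,
    Matrix.one_mul]
  funext q
  exact Muvec_mulVec _ q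

lemma YL_mulVec (hU : IsUpperTri U) (hUdet : IsUnit U.det) (hUsub : IsUnit (lead U).det)
    (F : Matrix (Fin n) (Fin n) ℝ) :
    (YL L U).mulVec (_root_.vec F) = fun q => _root_.vec (Ylin L U F) q.1 := by
  rw [YL, ← Matrix.mulVec_mulVec, ← Matrix.mulVec_mulVec, ← Matrix.mulVec_mulVec,
    vec_kron, pad_transpose, Mslt_mulVec]
  have hslt : slt (L⁻¹ * F * pad ((lead U)⁻¹)) = slt (L⁻¹ * F * U⁻¹) := by
    ext i j
    by_cases h : j < i
    · simp only [slt, Matrix.of_apply, if_pos h]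
      rw [Matrix.mul_apply, Matrix.mul_apply]
      refine Finset.sum_congr rfl fun k _ => ?_
      rw [pad_entries hU hUdet hUsub k j ?_]
      have hj : (j:ℕ) < (i:ℕ) := h
      have hi : (i:ℕ) < n := i.isLt
      omega
    · simp [slt, h]
  rw [hslt, vec_kron, Matrix.transpose_one, Matrix.mul_one]
  funext q
  exact Mslvec_mulVec _ q

lemma frob_Ylin_le (hL : IsUnitLowerTri L) (hU : IsUpperTri U) (hUdet : IsUnit U.det)
    (hUsub : IsUnit (lead U).det) (F : Matrix (Fin n) (Fin n) ℝ) :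
    frob (Ylin L U F) ≤ spec (YL L U) * frob F := by
  have hstrict : IsStrictLowerTri (Ylin L U F) := lower_mul_strict hL.isLower (slt_isStrict _)
  have h1 : frob (Ylin L U F) = vnorm ((YL L U).mulVec (_root_.vec F)) := by
    rw [frob_eq_vnorm_vec, YL_mulVec hU hUdet hUsub]
    exact (vnorm_subtype_eq _ (fun p hp => hstrict p.2 p.1 (not_lt.mp hp))).symm
  rw [h1, frob_eq_vnorm_vec]
  exact vnorm_mulVec_le _ _

lemma frob_Ulin_le (hU : IsUpperTri U) (F : Matrix (Fin n) (Fin n) ℝ) :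
    frob (Ulin L U F) ≤ spec (YU L U) * frob F := by
  have hupper : IsUpperTri (Ulin L U F) := upper_mul_upper (ut_isUpper _) hU
  have h1 : frob (Ulin L U F) = vnorm ((YU L U).mulVec (_root_.vec F)) := by
    rw [frob_eq_vnorm_vec, YU_mulVec]
    exact (vnorm_subtype_eq _ (fun p hp => hupper p.2 p.1 (not_le.mp hp))).symm
  rw [h1, frob_eq_vnorm_vec]
  exact vnorm_mulVec_le _ _

end YAux


section MoreAux

open Matrix

variable {n : ℕ}

lemma frob_neg (X : Matrix (Fin n) (Fin n) ℝ) : frob (-X) = frob X := by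
  rw [frob, frob]
  congr 1
  refine Finset.sum_congr rfl fun i _ => Finset.sum_congr rfl fun j _ => ?_
  rw [Matrix.neg_apply, neg_sq]

lemma vnorm_single (i : Fin n) : vnorm (fun k => if k = i then (1:ℝ) else 0) = 1 := by
  rw [vnorm]
  rw [show ∑ k : Fin n, (if k = i then (1:ℝ) else 0)^2 = 1 by
    rw [Finset.sum_eq_single i] <;> simp +contextual]
  exact Real.sqrt_one

lemma vnorm_vec_outer (y x : Fin n → ℝ) :
    vnorm (_root_.vec (Matrix.of fun k l => y k * x l)) = vnorm y * vnorm x := by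
  rw [vnorm, vnorm, vnorm, ← Real.sqrt_mul (Finset.sum_nonneg fun i _ => sq_nonneg _)]
  congr 1
  rw [Fintype.sum_prod_type, Finset.sum_mul_sum]
  rw [Finset.sum_comm]
  refine Finset.sum_congr rfl fun c _ => Finset.sum_congr rfl fun r _ => ?_
  simp only [_root_.vec, Matrix.of_apply]
  ring

lemma conj_outer (P Q : Matrix (Fin n) (Fin n) ℝ) (u w : Fin n → ℝ) :
    P * Matrix.of (fun k l => u k * w l) * Q
      = Matrix.of (fun k l => P.mulVec u k * Matrix.vecMul w Q l) := by
  ext k l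
  simp only [Matrix.mul_apply, Matrix.of_apply, Matrix.mulVec, Matrix.vecMul,
    dotProduct]
  rw [Finset.sum_mul_sum]
  rw [Finset.sum_comm]
  refine Finset.sum_congr rfl fun m _ => ?_
  rw [Finset.sum_mul]
  refine Finset.sum_congr rfl fun a _ => ?_
  ring

lemma lu_unique {L1 U1 L2 U2 : Matrix (Fin n) (Fin n) ℝ}
    (hL1 : IsUnitLowerTri L1) (hL2 : IsUnitLowerTri L2)
    (hU1 : IsUpperTri U1) (hU2 : IsUpperTri U2)
    (hdiag : ∀ j : Fin n, (j:ℕ) + 1 < n → U1 j j ≠ 0)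
    (heq : L1 * U1 = L2 * U2) : L1 = L2 ∧ U1 = U2 := by
  have hL2det := unitLower_det_isUnit hL2
  set D := L2⁻¹ * L1 with hDdef
  have hD : IsUnitLowerTri D := unitLower_mul (unitLower_inv hL2) hL1
  have hDU : D * U1 = U2 := by
    rw [hDdef, Matrix.mul_assoc, heq, ← Matrix.mul_assoc,
      Matrix.nonsing_inv_mul _ hL2det, Matrix.one_mul]
  have claim : ∀ m : ℕ, ∀ j i : Fin n, (j:ℕ) = m → j < i → D i j = 0 := by
    intro m
    induction m using Nat.strong_induction_on with
    | _ m ih =>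
      intro j i hjm hij
      have h0 : (D * U1) i j = 0 := by rw [hDU]; exact hU2 i j hij
      rw [Matrix.mul_apply, Finset.sum_eq_single j] at h0
      · have hU1jj : U1 j j ≠ 0 := hdiag j (by
          have h1 : (j:ℕ) < (i:ℕ) := hij
          have h2 := i.isLt
          omega)
        exact (mul_eq_zero.mp h0).resolve_right hU1jj
      · intro k _ hk
        rcases lt_or_gt_of_ne hk with hlt | hgt
        · rw [ih (k:ℕ) (by rw [← hjm]; exact hlt) k i rfl (lt_trans hlt hij), zero_mul]
        · rw [hU1 k j hgt, mul_zero]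
      · intro h'; exact absurd (Finset.mem_univ j) h'
  have hD1 : D = 1 := by
    ext i j
    rcases lt_trichotomy i j with h | h | h
    · rw [hD.2 i j h, Matrix.one_apply_ne h.ne]
    · subst h; rw [hD.1 i, Matrix.one_apply_eq]
    · rw [claim (j:ℕ) j i rfl h, Matrix.one_apply_ne h.ne']
  have hLL : L1 = L2 := by
    have h2 : L2 * D = L1 := by
      rw [hDdef, ← Matrix.mul_assoc, Matrix.mul_nonsing_inv _ hL2det, Matrix.one_mul]
    rw [← h2, hD1, Matrix.mul_one]
  refine ⟨hLL, ?_⟩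
  rw [← hDU, hD1, Matrix.one_mul]

end MoreAux

theorem stmt1 {n : ℕ} (A L U ΔA : Matrix (Fin n) (Fin n) ℝ)
    (hL : IsUnitLowerTri L) (hU : IsUpperTri U)
    (hUdet : IsUnit U.det) (hUsub : IsUnit (lead U).det)
    (hA : A = L * U)
    (hcond : spec (YL L U) * spec (YU L U) * frob ΔA < 1 / 4) :
    ∃ ΔL ΔU : Matrix (Fin n) (Fin n) ℝ,
      IsStrictLowerTri ΔL ∧ IsUpperTri ΔU ∧
      A + ΔA = (L + ΔL) * (U + ΔU) ∧
      (∀ ΔL' ΔU' : Matrix (Fin n) (Fin n) ℝ,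
        IsStrictLowerTri ΔL' → IsUpperTri ΔU' →
        A + ΔA = (L + ΔL') * (U + ΔU') → ΔL' = ΔL ∧ ΔU' = ΔU) ∧
      frob ΔU ≤ 2 * spec (YU L U) * frob ΔA /
          (1 + Real.sqrt (1 - 4 * spec (YU L U) * spec (YL L U) * frob ΔA)) ∧
      2 * spec (YU L U) * frob ΔA /
          (1 + Real.sqrt (1 - 4 * spec (YU L U) * spec (YL L U) * frob ΔA)) ≤
        2 * spec (YU L U) * frob ΔA := by
  classical
  have hLdet : IsUnit L.det := unitLower_det_isUnit hL
  set α := spec (YL L U) with hαdef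
  set β := spec (YU L U) with hβdef
  set ε := frob ΔA with hεdef
  have hα0 : 0 ≤ α := spec_nonneg _
  have hβ0 : 0 ≤ β := spec_nonneg _
  have hε0 : 0 ≤ ε := frob_nonneg _
  have hs1 : 4 * (α * β * ε) < 1 := by linarith
  have hs0 : 0 ≤ 4 * (α * β * ε) := by
    have h := mul_nonneg (mul_nonneg hα0 hβ0) hε0; linarith
  set σ := Real.sqrt (1 - 4 * (α * β * ε)) with hσdef
  have hσ0 : 0 < σ := Real.sqrt_pos.mpr (by linarith)
  have hσ1 : σ ≤ 1 := by
    rw [hσdef]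
    calc Real.sqrt (1 - 4 * (α * β * ε)) ≤ Real.sqrt 1 := Real.sqrt_le_sqrt (by linarith)
      _ = 1 := Real.sqrt_one
  have hσsq : σ ^ 2 = 1 - 4 * (α * β * ε) := by
    rw [hσdef]; exact Real.sq_sqrt (by linarith)
  have h1σ : (0:ℝ) < 1 + σ := by linarith
  set r := 2 * ε / (1 + σ) with hrdef
  have hr0 : 0 ≤ r := by rw [hrdef]; exact div_nonneg (by linarith) (le_of_lt h1σ)
  have hrkey : ε + α * β * r ^ 2 = r := by
    rw [hrdef]
    have h1σ' : (1:ℝ) + σ ≠ 0 := ne_of_gt h1σ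
    field_simp
    linear_combination ε * hσsq
  have hq1 : 2 * (α * β) * r < 1 := by
    rw [hrdef]
    have heq2 : 2 * (α * β) * (2 * ε / (1 + σ)) = 4 * (α * β * ε) / (1 + σ) := by
      field_simp; ring
    rw [heq2, div_lt_one h1σ]
    linarith
  have h2abr0 : 0 ≤ 2 * (α * β) * r :=
    mul_nonneg (mul_nonneg (by norm_num) (mul_nonneg hα0 hβ0)) hr0
  -- bounds for the quadratic map
  have hΦbound : ∀ F : Matrix (Fin n) (Fin n) ℝ,
      frob (ΔA - Ylin L U F * Ulin L U F) ≤ ε + α * β * (frob F) ^ 2 := by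
    intro F
    refine (frob_sub_le _ _).trans ?_
    have h1 : frob (Ylin L U F * Ulin L U F) ≤ (α * frob F) * (β * frob F) :=
      (frob_mul_le _ _).trans
        (mul_le_mul (frob_Ylin_le hL hU hUdet hUsub F) (frob_Ulin_le hU F)
          (frob_nonneg _) (mul_nonneg hα0 (frob_nonneg _)))
    have h2 : (α * frob F) * (β * frob F) = α * β * (frob F) ^ 2 := by ring
    rw [← hεdef]
    linarith
  have hΦlip : ∀ F G : Matrix (Fin n) (Fin n) ℝ,
      frob ((ΔA - Ylin L U F * Ulin L U F) - (ΔA - Ylin L U G * Ulin L U G))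
        ≤ α * β * (frob F + frob G) * frob (F - G) := by
    intro F G
    have hid : (ΔA - Ylin L U F * Ulin L U F) - (ΔA - Ylin L U G * Ulin L U G)
        = -(Ylin L U (F - G) * Ulin L U F + Ylin L U G * Ulin L U (F - G)) := by
      rw [Ylin_sub, Ulin_sub]
      noncomm_ring
    rw [hid, frob_neg]
    refine (frob_add_le _ _).trans ?_
    have h1 : frob (Ylin L U (F - G) * Ulin L U F) ≤ (α * frob (F - G)) * (β * frob F) :=
      (frob_mul_le _ _).trans (mul_le_mul (frob_Ylin_le hL hU hUdet hUsub _)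
        (frob_Ulin_le hU _) (frob_nonneg _) (mul_nonneg hα0 (frob_nonneg _)))
    have h2 : frob (Ylin L U G * Ulin L U (F - G)) ≤ (α * frob G) * (β * frob (F - G)) :=
      (frob_mul_le _ _).trans (mul_le_mul (frob_Ylin_le hL hU hUdet hUsub _)
        (frob_Ulin_le hU _) (frob_nonneg _) (mul_nonneg hα0 (frob_nonneg _)))
    have h3 : (α * frob (F - G)) * (β * frob F) + (α * frob G) * (β * frob (F - G))
        = α * β * (frob F + frob G) * frob (F - G) := by ring
    linarith
  -- set up the contraction on the closed ball of radius r
  have hnvec : ∀ X : Matrix (Fin n) (Fin n) ℝ,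
      ‖(WithLp.equiv 2 (Fin n × Fin n → ℝ)).symm (_root_.vec X)‖ = frob X := by
    intro X
    rw [frob_eq_vnorm_vec, vnorm_eq_norm]
  have hnormF : ∀ v : EuclideanSpace ℝ (Fin n × Fin n),
      frob (Matrix.of fun i j => v (j, i)) = ‖v‖ := by
    intro v
    rw [← hnvec]
    rfl
  set Φ : EuclideanSpace ℝ (Fin n × Fin n) → EuclideanSpace ℝ (Fin n × Fin n) :=
    fun v => (WithLp.equiv 2 (Fin n × Fin n → ℝ)).symm
      (_root_.vec (ΔA - Ylin L U (Matrix.of fun i j => v (j, i)) *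
        Ulin L U (Matrix.of fun i j => v (j, i)))) with hΦdef
  set S : Set (EuclideanSpace ℝ (Fin n × Fin n)) := Metric.closedBall 0 r with hSdef
  haveI hScomplete : CompleteSpace S := Metric.isClosed_closedBall.completeSpace_coe
  haveI hSne : Nonempty S := ⟨⟨0, Metric.mem_closedBall_self hr0⟩⟩
  have hmaps : ∀ v : EuclideanSpace ℝ (Fin n × Fin n), v ∈ S → Φ v ∈ S := by
    intro v hv
    rw [hSdef, Metric.mem_closedBall, dist_zero_right] at hv ⊢
    rw [hΦdef]
    simp only []
    rw [hnvec]
    have hf : frob (Matrix.of fun i j => v (j, i)) ≤ r := by rw [hnormF]; exact hv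
    refine (hΦbound _).trans ?_
    have hsq : (frob (Matrix.of fun i j => v (j, i))) ^ 2 ≤ r ^ 2 :=
      pow_le_pow_left₀ (frob_nonneg _) hf 2
    have hmono := mul_le_mul_of_nonneg_left hsq (mul_nonneg hα0 hβ0)
    linarith [hrkey]
  set Ψ : S → S := fun vs => ⟨Φ vs.1, hmaps vs.1 vs.2⟩ with hΨdef
  have hcontract : ContractingWith (Real.toNNReal (2 * (α * β) * r)) Ψ := by
    constructor
    · exact Real.toNNReal_lt_one.mpr hq1
    · refine LipschitzWith.of_dist_le_mul fun x y => ?_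
      rw [Subtype.dist_eq, Subtype.dist_eq, dist_eq_norm, dist_eq_norm]
      have hdiff : (Ψ x).1 - (Ψ y).1
          = (WithLp.equiv 2 (Fin n × Fin n → ℝ)).symm
            (_root_.vec ((ΔA - Ylin L U (Matrix.of fun i j => x.1 (j, i)) *
                Ulin L U (Matrix.of fun i j => x.1 (j, i))) -
              (ΔA - Ylin L U (Matrix.of fun i j => y.1 (j, i)) *
                Ulin L U (Matrix.of fun i j => y.1 (j, i))))) := by
        rw [_root_.vec_sub, WithLp.equiv_symm_apply, WithLp.toLp_sub]; rfl
      rw [hdiff, hnvec]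
      have hx : frob (Matrix.of fun i j => x.1 (j, i)) ≤ r := by
        rw [hnormF]; exact mem_closedBall_zero_iff.mp x.2
      have hy : frob (Matrix.of fun i j => y.1 (j, i)) ≤ r := by
        rw [hnormF]; exact mem_closedBall_zero_iff.mp y.2
      have hsub : frob ((Matrix.of fun i j => x.1 (j, i)) - (Matrix.of fun i j => y.1 (j, i)))
          = ‖x.1 - y.1‖ := by
        rw [show (Matrix.of fun i j => x.1 (j, i)) - (Matrix.of fun i j => y.1 (j, i))
          = Matrix.of fun i j => (x.1 - y.1) (j, i) from rfl, hnormF]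
      refine (hΦlip _ _).trans ?_
      rw [hsub]
      rw [Real.coe_toNNReal _ h2abr0]
      have hfg0 : 0 ≤ ‖x.1 - y.1‖ := norm_nonneg _
      nlinarith [mul_nonneg (mul_nonneg hα0 hβ0) hfg0]
  set vs := ContractingWith.fixedPoint Ψ hcontract with hvsdef
  have hfix : Ψ vs = vs := hcontract.fixedPoint_isFixedPt
  set Fstar := Matrix.of (fun i j => (vs.1 : Fin n × Fin n → ℝ) (j, i)) with hFdef
  have hFfix : ΔA - Ylin L U Fstar * Ulin L U Fstar = Fstar := by
    have h := congrArg (fun z : S => Matrix.of (fun i j => (z.1 : Fin n × Fin n → ℝ) (j, i))) hfix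
    exact h
  have hFr : frob Fstar ≤ r := by
    rw [hFdef, hnormF]
    exact mem_closedBall_zero_iff.mp vs.2
  set Mstar := L⁻¹ * Fstar * U⁻¹ with hMdef
  set ΔL := Ylin L U Fstar with hΔLdef
  set ΔU := Ulin L U Fstar with hΔUdef
  have hΔLstrict : IsStrictLowerTri ΔL := lower_mul_strict hL.isLower (slt_isStrict _)
  have hΔUupper : IsUpperTri ΔU := upper_mul_upper (ut_isUpper _) hU
  have hsplit : L * ΔU + ΔL * U = Fstar := by
    rw [hΔLdef, hΔUdef]
    unfold Ylin Ulin
    have e1 : L * (ut (L⁻¹ * Fstar * U⁻¹) * U) + L * slt (L⁻¹ * Fstar * U⁻¹) * U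
        = L * (ut (L⁻¹ * Fstar * U⁻¹) + slt (L⁻¹ * Fstar * U⁻¹)) * U := by
      noncomm_ring
    rw [e1, ut_add_slt]
    have e2 : L * (L⁻¹ * Fstar * U⁻¹) * U = L * L⁻¹ * Fstar * (U⁻¹ * U) := by
      noncomm_ring
    rw [e2, Matrix.mul_nonsing_inv _ hLdet, Matrix.nonsing_inv_mul _ hUdet,
      Matrix.one_mul, Matrix.mul_one]
  have hprod : ΔL * ΔU = ΔA - Fstar := by
    rw [hΔLdef, hΔUdef]
    have h := sub_eq_iff_eq_add.mp hFfix
    exact eq_sub_of_add_eq' h.symm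
  have hfact : A + ΔA = (L + ΔL) * (U + ΔU) := by
    have e : (L + ΔL) * (U + ΔU) = L * U + (L * ΔU + ΔL * U) + ΔL * ΔU := by
      noncomm_ring
    rw [e, hsplit, hprod, hA]
    abel
  have hΔUbound : frob ΔU ≤ β * r := by
    rw [hΔUdef]
    calc frob (Ulin L U Fstar) ≤ β * frob Fstar := frob_Ulin_le hU Fstar
      _ ≤ β * r := mul_le_mul_of_nonneg_left hFr hβ0
  have hβr : β * r = 2 * β * ε / (1 + σ) := by
    rw [hrdef]; ring
  -- diagonal entries of U + ΔU below the last are nonzero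
  have hdiagU : ∀ i : Fin n, (i:ℕ) + 1 < n → (U + ΔU) i i ≠ 0 := by
    intro i hi
    set y : Fin n → ℝ := fun k => L⁻¹ i k with hydef
    set x : Fin n → ℝ := fun k => U⁻¹ k i with hxdef
    have hyi : y i = 1 := unitLower_inv_diag hL i
    have hxiU : x i * U i i = 1 := upper_inv_diag hU hUdet i
    have hUii : U i i ≠ 0 := upper_diag_ne_zero hU hUdet i
    have hxi0 : x i ≠ 0 := fun h => by rw [h, zero_mul] at hxiU; exact zero_ne_one hxiU
    have hy1 : 1 ≤ vnorm y := by
      have := abs_le_vnorm y i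
      rw [hyi] at this
      simpa using this
    have hy0 : 0 < vnorm y := lt_of_lt_of_le one_pos hy1
    have hx0 : 0 < vnorm x :=
      lt_of_lt_of_le (abs_pos.mpr hxi0) (abs_le_vnorm x i)
    -- β lower bound
    have hbeta : |U i i| * (vnorm y * vnorm x) ≤ β := by
      set F₀ : Matrix (Fin n) (Fin n) ℝ := Matrix.of (fun k l => y k * x l) with hF₀def
      have hcomp := abs_le_vnorm ((YU L U).mulVec (_root_.vec F₀)) ⟨(i, i), le_refl i⟩
      have hcompval : (YU L U).mulVec (_root_.vec F₀) ⟨(i, i), le_refl i⟩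
          = _root_.vec (Ulin L U F₀) (i, i) := by rw [YU_mulVec]
      rw [hcompval] at hcomp
      have hval : _root_.vec (Ulin L U F₀) (i, i) = ((vnorm y)^2 * (vnorm x)^2) * U i i := by
        show Ulin L U F₀ i i = _
        unfold Ulin
        rw [diag_ut_mul hU]
        rw [hF₀def, conj_outer]
        have hyy : (L⁻¹.mulVec y) i = (vnorm y)^2 := by
          rw [sq_vnorm]
          simp only [Matrix.mulVec, dotProduct, hydef]
          exact Finset.sum_congr rfl fun k _ => by ring
        have hxx : (Matrix.vecMul x U⁻¹) i = (vnorm x)^2 := by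
          rw [sq_vnorm]
          simp only [Matrix.vecMul, dotProduct, hxdef]
          exact Finset.sum_congr rfl fun k _ => by ring
        rw [Matrix.of_apply, hyy, hxx]
      have hub := vnorm_mulVec_le (YU L U) (_root_.vec F₀)
      have hvF₀ : vnorm (_root_.vec F₀) = vnorm y * vnorm x := vnorm_vec_outer y x
      rw [hvF₀] at hub
      have habs : |((vnorm y)^2 * (vnorm x)^2) * U i i|
          = ((vnorm y)^2 * (vnorm x)^2) * |U i i| := by
        rw [abs_mul, abs_of_nonneg (mul_nonneg (sq_nonneg _) (sq_nonneg _))]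
      rw [hval, habs] at hcomp
      have hchain : ((vnorm y)^2 * (vnorm x)^2) * |U i i| ≤ β * (vnorm y * vnorm x) :=
        le_trans hcomp hub
      have hpos : 0 < vnorm y * vnorm x := mul_pos hy0 hx0
      have hrearr : (|U i i| * (vnorm y * vnorm x)) * (vnorm y * vnorm x)
          = ((vnorm y)^2 * (vnorm x)^2) * |U i i| := by ring
      have hstep : (|U i i| * (vnorm y * vnorm x)) * (vnorm y * vnorm x)
          ≤ β * (vnorm y * vnorm x) := by
        rw [hrearr]; exact hchain
      exact le_of_mul_le_mul_right hstep hpos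
    -- α lower bound
    have hii : (i:ℕ) < n - 1 := by omega
    set i' : Fin n := ⟨(i:ℕ) + 1, hi⟩ with hi'def
    have hii' : i < i' := by
      rw [Fin.lt_def]
      simp [hi'def]
    have halpha : |U⁻¹ i i| ≤ α := by
      set G : Matrix (Fin n) (Fin n) ℝ :=
        Matrix.of (fun k l => (if k = i' then (1:ℝ) else 0) * (if l = i then (1:ℝ) else 0))
        with hGdef
      have hcomp := abs_le_vnorm ((YL L U).mulVec (_root_.vec G)) ⟨(i, i'), hii'⟩
      have hcompval : (YL L U).mulVec (_root_.vec G) ⟨(i, i'), hii'⟩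
          = _root_.vec (Ylin L U G) (i, i') := by rw [YL_mulVec hU hUdet hUsub]
      rw [hcompval] at hcomp
      have hMG : L⁻¹ * G * U⁻¹ = Matrix.of (fun k l => L⁻¹ k i' * U⁻¹ i l) := by
        rw [hGdef, conj_outer]
        ext k l
        simp only [Matrix.of_apply]
        congr 1
        · simp only [Matrix.mulVec, dotProduct]
          rw [Finset.sum_eq_single i']
          · simp
          · intro b _ hb; simp [hb]
          · intro h'; exact absurd (Finset.mem_univ i') h'
        · simp only [Matrix.vecMul, dotProduct]
          rw [Finset.sum_eq_single i]
          · simp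
          · intro b _ hb; simp [hb]
          · intro h'; exact absurd (Finset.mem_univ i) h'
      have hval : _root_.vec (Ylin L U G) (i, i') = U⁻¹ i i := by
        show Ylin L U G i' i = _
        unfold Ylin
        rw [hMG, Matrix.mul_apply, Finset.sum_eq_single i']
        · have hslt : slt (Matrix.of fun a b => L⁻¹ a i' * U⁻¹ i b) i' i
              = L⁻¹ i' i' * U⁻¹ i i := by
            simp [slt, hii']
          rw [hslt, hL.1 i', unitLower_inv_diag hL i', one_mul, one_mul]
        · intro k _ hk
          rcases lt_or_gt_of_ne hk with hlt | hgt
          · by_cases hik : i < k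
            · have hslt : slt (Matrix.of fun a b => L⁻¹ a i' * U⁻¹ i b) k i
                  = L⁻¹ k i' * U⁻¹ i i := by simp [slt, hik]
              rw [hslt, (unitLower_inv hL).2 k i' hlt, zero_mul, mul_zero]
            · have hslt : slt (Matrix.of fun a b => L⁻¹ a i' * U⁻¹ i b) k i = 0 := by
                simp [slt, hik]
              rw [hslt, mul_zero]
          · rw [hL.2 i' k hgt, zero_mul]
        · intro h'; exact absurd (Finset.mem_univ i') h'
      have hub := vnorm_mulVec_le (YL L U) (_root_.vec G)
      have hvG : vnorm (_root_.vec G) = 1 := by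
        rw [hGdef, vnorm_vec_outer, vnorm_single, vnorm_single, one_mul]
      rw [hvG, mul_one] at hub
      rw [hval] at hcomp
      exact le_trans hcomp hub
    have hUinv_ii : U⁻¹ i i = x i := rfl
    have habs_inv : |U⁻¹ i i| = |U i i|⁻¹ := by
      rw [hUinv_ii]
      have : |x i| * |U i i| = 1 := by rw [← abs_mul, hxiU, abs_one]
      field_simp at this ⊢
      linarith [this]
    -- bound on |Mstar i i|
    have hMid : Mstar i i = ∑ k, y k * (Fstar.mulVec x) k := by
      rw [hMdef]
      simp only [Matrix.mul_apply, Matrix.mulVec, dotProduct, hydef, hxdef]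
      simp only [Finset.sum_mul]
      rw [Finset.sum_comm]
      refine Finset.sum_congr rfl fun k _ => ?_
      rw [Finset.mul_sum]
      refine Finset.sum_congr rfl fun l _ => ?_
      ring
    have hMabs : |Mstar i i| ≤ (vnorm y * vnorm x) * frob Fstar := by
      rw [hMid]
      refine (abs_sum_mul_le y (Fstar.mulVec x)).trans ?_
      have := vnorm_mulVec_frob Fstar x
      calc vnorm y * vnorm (Fstar.mulVec x) ≤ vnorm y * (frob Fstar * vnorm x) :=
            mul_le_mul_of_nonneg_left this (vnorm_nonneg _)
        _ = (vnorm y * vnorm x) * frob Fstar := by ring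
    have hyx_ab : vnorm y * vnorm x ≤ α * β := by
      have hUabs : 0 < |U i i| := abs_pos.mpr hUii
      have h1 : vnorm y * vnorm x ≤ β * |U i i|⁻¹ := by
        calc vnorm y * vnorm x = (|U i i| * (vnorm y * vnorm x)) * |U i i|⁻¹ := by
              field_simp
          _ ≤ β * |U i i|⁻¹ :=
              mul_le_mul_of_nonneg_right hbeta (inv_nonneg.mpr (abs_nonneg _))
      calc vnorm y * vnorm x ≤ β * |U i i|⁻¹ := h1
        _ ≤ β * α := mul_le_mul_of_nonneg_left (by rw [← habs_inv]; exact halpha) hβ0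
        _ = α * β := by ring
    have hMhalf : |Mstar i i| < 1 := by
      have h2 : |Mstar i i| ≤ (α * β) * r := by
        refine hMabs.trans ?_
        calc (vnorm y * vnorm x) * frob Fstar ≤ (α * β) * frob Fstar :=
              mul_le_mul_of_nonneg_right hyx_ab (frob_nonneg _)
          _ ≤ (α * β) * r := mul_le_mul_of_nonneg_left hFr (mul_nonneg hα0 hβ0)
      have habs0 := abs_nonneg (Mstar i i)
      linarith [hq1, h2]
    have hUdd : (U + ΔU) i i = U i i * (1 + Mstar i i) := by
      have hdiag : ΔU i i = Mstar i i * U i i := by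
        rw [hΔUdef]
        unfold Ulin
        rw [diag_ut_mul hU, hMdef]
      rw [Matrix.add_apply, hdiag]
      ring
    rw [hUdd]
    refine mul_ne_zero hUii ?_
    rcases abs_lt.mp hMhalf with ⟨hm1, hm2⟩
    intro hcontra
    linarith
  -- unit lower triangularity of L + ΔL
  have hLfac : IsUnitLowerTri (L + ΔL) := by
    constructor
    · intro k
      rw [Matrix.add_apply, hL.1 k, hΔLstrict k k (le_refl k), add_zero]
    · intro k j hkj
      rw [Matrix.add_apply, hL.2 k j hkj, hΔLstrict k j (le_of_lt hkj), add_zero]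
  have hUfac : IsUpperTri (U + ΔU) := by
    intro k j hkj
    rw [Matrix.add_apply, hU k j hkj, hΔUupper k j hkj, add_zero]
  refine ⟨ΔL, ΔU, hΔLstrict, hΔUupper, hfact, ?_, ?_, ?_⟩
  · -- uniqueness
    intro ΔL' ΔU' hΔL' hΔU' hfact'
    have hLfac' : IsUnitLowerTri (L + ΔL') := by
      constructor
      · intro k
        rw [Matrix.add_apply, hL.1 k, hΔL' k k (le_refl k), add_zero]
      · intro k j hkj
        rw [Matrix.add_apply, hL.2 k j hkj, hΔL' k j (le_of_lt hkj), add_zero]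
    have hUfac' : IsUpperTri (U + ΔU') := by
      intro k j hkj
      rw [Matrix.add_apply, hU k j hkj, hΔU' k j hkj, add_zero]
    have heq : (L + ΔL) * (U + ΔU) = (L + ΔL') * (U + ΔU') := by
      rw [← hfact, ← hfact']
    obtain ⟨hLeq, hUeq⟩ := lu_unique hLfac hLfac' hUfac hUfac' hdiagU heq
    constructor
    · exact (add_left_cancel hLeq).symm
    · exact (add_left_cancel hUeq).symm
  · -- the bound
    rw [show (4:ℝ) * β * α * ε = 4 * (α * β * ε) from by ring, ← hσdef]
    exact hΔUbound.trans (le_of_eq hβr)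
  · -- second bound
    rw [show (4:ℝ) * β * α * ε = 4 * (α * β * ε) from by ring, ← hσdef]
    exact div_le_self (mul_nonneg (mul_nonneg (by norm_num) hβ0) hε0) (by linarith)
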